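/- Let G be an almost simple group and K a 2-closed permutation group with G* ≤ K ≤ Sym(G). Let L be the minimal block of K, K_𝔏 the subgroup of K mapping each right coset of L to itself, and U the union of the right cosets of L that are equivalent to L (so U is a normal subgroup of G containing L). Then K_𝔏 is the direct product of its constituents on the right cosets of U: a permutation f of G belongs to K_𝔏 if and only if for every right coset Y of U there exists k ∈ K_𝔏 such that f and k agree at every point of Y. -/

import Mathlib

/-- The subgroup of `Sym(A)` consisting of the right translations `x ↦ x * g`. -/
def rightMuls (A : Type*) [Group A] : Subgroup (Equiv.Perm A) :=
  (MulAction.toPermHom Aᵐᵒᵖ A).range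

/-- The holomorph of `A`, i.e. the normalizer in `Sym(A)` of the group of right
translations. -/
def Hol (A : Type*) [Group A] : Subgroup (Equiv.Perm A) :=
  Subgroup.normalizer ((rightMuls A) : Set (Equiv.Perm A))

/-- `D(2,A)`: the subgroup of `Sym(A)` generated by `Hol(A)` and the inversion
permutation `g ↦ g⁻¹`. -/
def D2 (A : Type*) [Group A] : Subgroup (Equiv.Perm A) :=
  Hol A ⊔ Subgroup.closure {Equiv.inv A}

/-- The homomorphism `H × H →* Sym(A)` sending `(h₁, h₂)` to `x ↦ h₁ * x * h₂⁻¹`. -/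
def biTransHom {A : Type*} [Group A] (H : Subgroup A) : H × H →* Equiv.Perm A where
  toFun p := (Equiv.mulLeft (p.1 : A)).trans (Equiv.mulRight ((p.2 : A)⁻¹))
  map_one' := by ext x; simp
  map_mul' p q := by ext x; simp [mul_assoc]

/-- `H*`: the subgroup of `Sym(A)` of all permutations `x ↦ h₁ * x * h₂` with
`h₁, h₂ ∈ H`. -/
def starGroup {A : Type*} [Group A] (H : Subgroup A) : Subgroup (Equiv.Perm A) :=
  (biTransHom H).range

/-- The automorphism group of the Cayley graph `Cay(A, X)`: all permutations `f`
of `A` such that `h * g⁻¹ ∈ X ↔ f h * (f g)⁻¹ ∈ X` for all `g, h`. -/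
def cayAut {A : Type*} [Group A] (X : Set A) : Subgroup (Equiv.Perm A) where
  carrier := {f : Equiv.Perm A | ∀ g h : A, h * g⁻¹ ∈ X ↔ f h * (f g)⁻¹ ∈ X}
  one_mem' := by intro g h; simp
  mul_mem' := by
    intro a b ha hb g h
    simpa [Equiv.Perm.mul_apply] using (hb g h).trans (ha (b g) (b h))
  inv_mem' := by
    intro a ha g h
    simpa using (ha (a⁻¹ g) (a⁻¹ h)).symm

/-- A `K`-block: a subset `B` such that every `k ∈ K` either fixes `B` setwise or
moves it to a disjoint set. -/
def IsBlock {A : Type*} [Group A] (K : Subgroup (Equiv.Perm A)) (B : Set A) : Prop :=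
  ∀ k ∈ K, (k : Equiv.Perm A) '' B = B ∨ ((k : Equiv.Perm A) '' B) ∩ B = ∅

/-- The minimal block of `K`: the intersection of all `K`-blocks of size at least 2
containing the identity. -/
def minBlock {A : Type*} [Group A] (K : Subgroup (Equiv.Perm A)) : Set A :=
  ⋂₀ {B : Set A | IsBlock K B ∧ (1 : A) ∈ B ∧ 2 ≤ B.ncard}

/-- The right coset `L * g`. -/
def rcoset {A : Type*} [Group A] (L : Subgroup A) (g : A) : Set A :=
  {x : A | x * g⁻¹ ∈ L}

/-- `K_𝔏`: the subgroup of all elements of `K` mapping each right coset of `L` to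
itself. -/
def stabCosets {A : Type*} [Group A] (K : Subgroup (Equiv.Perm A)) (L : Subgroup A) :
    Subgroup (Equiv.Perm A) where
  carrier := {f : Equiv.Perm A | f ∈ K ∧ ∀ x : A, f x * x⁻¹ ∈ L}
  one_mem' := ⟨K.one_mem, fun x => by simpa using L.one_mem⟩
  mul_mem' := by
    rintro a b ⟨haK, ha⟩ ⟨hbK, hb⟩
    refine ⟨K.mul_mem haK hbK, fun x => ?_⟩
    have := L.mul_mem (ha (b x)) (hb x)
    simpa [Equiv.Perm.mul_apply, mul_assoc] using this
  inv_mem' := by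
    rintro a ⟨haK, ha⟩
    refine ⟨K.inv_mem haK, fun x => ?_⟩
    have := L.inv_mem (ha (a⁻¹ x))
    simpa [mul_inv_rev] using this

/-- Two subsets `X`, `X'` are equivalent (w.r.t. `K` and `L`) if every element of
`K_𝔏` fixes `X` pointwise iff it fixes `X'` pointwise. -/
def cosetEquiv {A : Type*} [Group A] (K : Subgroup (Equiv.Perm A)) (L : Subgroup A)
    (X X' : Set A) : Prop :=
  ∀ f ∈ stabCosets K L,
    ((∀ x ∈ X, (f : Equiv.Perm A) x = x) ↔ (∀ x ∈ X', (f : Equiv.Perm A) x = x))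

/-- The union `U` of the right cosets of `L` that are equivalent to `L`. -/
def Uset {A : Type*} [Group A] (K : Subgroup (Equiv.Perm A)) (L : Subgroup A) : Set A :=
  {x : A | cosetEquiv K L (L : Set A) (rcoset L x)}

/-- A permutation group `K` is 2-closed if it contains every permutation `f` such
that every pair of points can be moved as by `f` by some element of `K`. -/
def Is2Closed {A : Type*} [Group A] (K : Subgroup (Equiv.Perm A)) : Prop :=
  ∀ f : Equiv.Perm A, (∀ a b : A, ∃ k ∈ K, (k : Equiv.Perm A) a = f a ∧ k b = f b) → f ∈ K

section AuxChunkA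
set_option linter.unusedSectionVars false

variable {G : Type*} [Group G] [Fintype G]

lemma mulLeft_mem_K {K : Subgroup (Equiv.Perm G)} (hGK : starGroup (⊤ : Subgroup G) ≤ K) (g : G) :
    Equiv.mulLeft g ∈ K := by
  apply hGK
  refine ⟨(⟨g, trivial⟩, ⟨1, trivial⟩), ?_⟩
  ext x
  simp [biTransHom]

lemma mulRight_mem_K {K : Subgroup (Equiv.Perm G)} (hGK : starGroup (⊤ : Subgroup G) ≤ K) (g : G) :
    Equiv.mulRight g ∈ K := by
  apply hGK
  refine ⟨(⟨1, trivial⟩, ⟨g⁻¹, trivial⟩), ?_⟩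
  ext x
  simp [biTransHom]

lemma conjPerm_mem_K {K : Subgroup (Equiv.Perm G)} (hGK : starGroup (⊤ : Subgroup G) ≤ K) (g : G) :
    Equiv.mulLeft g * Equiv.mulRight g⁻¹ ∈ K :=
  K.mul_mem (mulLeft_mem_K hGK g) (mulRight_mem_K hGK g⁻¹)

lemma mem_stabCosets' {K : Subgroup (Equiv.Perm G)} {L : Subgroup G} (f : Equiv.Perm G) :
    f ∈ stabCosets K L ↔ f ∈ K ∧ ∀ x : G, f x * x⁻¹ ∈ L := Iff.rfl

lemma exists_S_ne_one (S : Subgroup G) (hSnonabelian : ¬ ∀ a b : S, a * b = b * a) :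
    ∃ s : G, s ∈ S ∧ s ≠ 1 := by
  by_contra h
  push_neg at h
  apply hSnonabelian
  intro a b
  have ha : (a : G) = 1 := by
    by_contra ha'
    exact ha' (h a a.2)
  have : a = 1 := Subtype.ext ha
  rw [this, one_mul, mul_one]

/-- Key normal subgroup lemma: a subgroup `N` normalized by `L'` (where `S ≤ L'`),
if nontrivial, contains `S`. -/
lemma normal_ge_S (S : Subgroup G) (hSnormal : S.Normal) (hSsimple : IsSimpleGroup S)
    (hScent : ∀ g : G, (∀ s ∈ S, g * s = s * g) → g = 1)
    (L' : Subgroup G) (hSL : ∀ s ∈ S, s ∈ L')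
    (N : Subgroup G) (hconj : ∀ l ∈ L', ∀ n ∈ N, l * n * l⁻¹ ∈ N)
    (hnt : ∃ n ∈ N, n ≠ (1 : G)) : ∀ s ∈ S, s ∈ N := by
  by_cases hc : ∃ n ∈ N, ∃ s ∈ S, n * s ≠ s * n
  · obtain ⟨n, hn, s, hs, hns⟩ := hc
    have hcS : n * s * n⁻¹ * s⁻¹ ∈ S := by
      have h1 : n * s * n⁻¹ ∈ S := hSnormal.conj_mem s hs n
      exact S.mul_mem h1 (S.inv_mem hs)
    have hcN : n * s * n⁻¹ * s⁻¹ ∈ N := by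
      have h1 : s * n⁻¹ * s⁻¹ ∈ N := hconj s (hSL s hs) n⁻¹ (N.inv_mem hn)
      have h2 : n * (s * n⁻¹ * s⁻¹) ∈ N := N.mul_mem hn h1
      have heq : n * (s * n⁻¹ * s⁻¹) = n * s * n⁻¹ * s⁻¹ := by group
      rwa [heq] at h2
    have hcne : n * s * n⁻¹ * s⁻¹ ≠ 1 := by
      intro h
      apply hns
      calc n * s = n * s * n⁻¹ * s⁻¹ * (s * n) := by group
        _ = 1 * (s * n) := by rw [h]
        _ = s * n := one_mul _
    -- consider N ∩ S inside S
    have hMnormal : (N.subgroupOf S).Normal := by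
      constructor
      intro m hm σ
      rw [Subgroup.mem_subgroupOf] at hm ⊢
      have := hconj (σ : G) (hSL σ σ.2) (m : G) hm
      simpa using this
    rcases hMnormal.eq_bot_or_eq_top with hbot | htop
    · exfalso
      have hmem : (⟨n * s * n⁻¹ * s⁻¹, hcS⟩ : S) ∈ N.subgroupOf S := by
        rw [Subgroup.mem_subgroupOf]; exact hcN
      rw [hbot, Subgroup.mem_bot] at hmem
      exact hcne (congrArg Subtype.val hmem)
    · intro s' hs'
      have hmem : (⟨s', hs'⟩ : S) ∈ N.subgroupOf S := by rw [htop]; trivial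
      rwa [Subgroup.mem_subgroupOf] at hmem
  · exfalso
    push_neg at hc
    obtain ⟨n, hn, hne⟩ := hnt
    exact hne (hScent n (fun s hs => hc n hn s hs))

end AuxChunkA
section AuxChunkB
set_option linter.unusedSectionVars false

variable {G : Type*} [Group G] [Fintype G]

/-- the family of blocks through 1 of size ≥ 2 -/
def blockFam (K : Subgroup (Equiv.Perm G)) : Set (Set G) :=
  {B : Set G | IsBlock K B ∧ (1 : G) ∈ B ∧ 2 ≤ B.ncard}

lemma minBlock_eq_sInter (K : Subgroup (Equiv.Perm G)) : minBlock K = ⋂₀ blockFam K := rfl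

lemma one_mem_minBlock (K : Subgroup (Equiv.Perm G)) : (1 : G) ∈ minBlock K := by
  intro B hB; exact hB.2.1

/-- every member of the block family contains S -/
lemma blockFam_ge_S (S : Subgroup G) (hSnormal : S.Normal) (hSsimple : IsSimpleGroup S)
    (hScent : ∀ g : G, (∀ s ∈ S, g * s = s * g) → g = 1)
    (K : Subgroup (Equiv.Perm G)) (hGK : starGroup (⊤ : Subgroup G) ≤ K)
    (B : Set G) (hB : B ∈ blockFam K) : ∀ s ∈ S, s ∈ B := by
  obtain ⟨hBlock, hB1, hBcard⟩ := hB
  -- B is closed under right multiplication by its elements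
  have hmulr : ∀ b ∈ B, ∀ a ∈ B, a * b ∈ B := by
    intro b hb a ha
    have himg := hBlock (Equiv.mulRight b) (mulRight_mem_K hGK b)
    rcases himg with h | h
    · rw [← h]; exact ⟨a, ha, by simp⟩
    · exfalso
      have : b ∈ Equiv.mulRight b '' B ∩ B := ⟨⟨1, hB1, by simp⟩, hb⟩
      rw [h] at this
      exact this
  have hinv : ∀ b ∈ B, b⁻¹ ∈ B := by
    intro b hb
    have himg := hBlock (Equiv.mulRight b) (mulRight_mem_K hGK b)
    rcases himg with h | h
    · have : (1 : G) ∈ Equiv.mulRight b '' B := by rw [h]; exact hB1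
      obtain ⟨x, hx, hxb⟩ := this
      simp only [Equiv.coe_mulRight] at hxb
      have : x = b⁻¹ := eq_inv_of_mul_eq_one_left hxb
      rwa [← this]
    · exfalso
      have : b ∈ Equiv.mulRight b '' B ∩ B := ⟨⟨1, hB1, by simp⟩, hb⟩
      rw [h] at this
      exact this
  have hconj : ∀ g : G, ∀ b ∈ B, g * b * g⁻¹ ∈ B := by
    intro g b hb
    have himg := hBlock (Equiv.mulLeft g * Equiv.mulRight g⁻¹) (conjPerm_mem_K hGK g)
    rcases himg with h | h
    · rw [← h]
      refine ⟨b, hb, ?_⟩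
      simp [Equiv.Perm.mul_apply, mul_assoc]
    · exfalso
      have h1 : (1 : G) ∈ (Equiv.mulLeft g * Equiv.mulRight g⁻¹) '' B ∩ B := by
        refine ⟨⟨1, hB1, ?_⟩, hB1⟩
        simp [Equiv.Perm.mul_apply]
      rw [h] at h1
      exact h1
  -- build the subgroup
  let N : Subgroup G :=
    { carrier := B
      one_mem' := hB1
      mul_mem' := fun {a b} ha hb => hmulr b hb a ha
      inv_mem' := fun {a} ha => hinv a ha }
  have hnt : ∃ n ∈ N, n ≠ (1 : G) := by
    by_contra h
    push_neg at h
    have hsub : B ⊆ {(1 : G)} := by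
      intro x hx
      exact h x hx
    have := Set.ncard_le_ncard hsub (Set.finite_singleton 1)
    rw [Set.ncard_singleton] at this
    omega
  exact normal_ge_S S hSnormal hSsimple hScent ⊤ (fun s _ => trivial) N
    (fun l _ n hn => hconj l n hn) hnt

lemma S_le_L (S : Subgroup G) (hSnormal : S.Normal) (hSsimple : IsSimpleGroup S)
    (hScent : ∀ g : G, (∀ s ∈ S, g * s = s * g) → g = 1)
    (K : Subgroup (Equiv.Perm G)) (hGK : starGroup (⊤ : Subgroup G) ≤ K)
    (L : Subgroup G) (hL : (L : Set G) = minBlock K) : ∀ s ∈ S, s ∈ L := by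
  intro s hs
  have : s ∈ minBlock K := by
    intro B hB
    exact blockFam_ge_S S hSnormal hSsimple hScent K hGK B hB s hs
  rw [← SetLike.mem_coe, hL]
  exact this

lemma L_isBlock (K : Subgroup (Equiv.Perm G)) (L : Subgroup G)
    (hL : (L : Set G) = minBlock K) : IsBlock K (L : Set G) := by
  intro k hk
  by_cases hd : k '' (L : Set G) ∩ (L : Set G) = ∅
  · right; exact hd
  · left
    obtain ⟨z, hz1, hz2⟩ := Set.nonempty_iff_ne_empty.2 hd
    rw [hL] at hz1 hz2 ⊢
    have key : ∀ B ∈ blockFam K, k '' B = B := by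
      intro B hB
      rcases hB.1 k hk with h | h
      · exact h
      · exfalso
        have hz1' : z ∈ k '' B := by
          obtain ⟨w, hw, rfl⟩ := hz1
          exact ⟨w, hw B hB, rfl⟩
        have : z ∈ k '' B ∩ B := ⟨hz1', hz2 B hB⟩
        rw [h] at this
        exact this
    apply subset_antisymm
    · rintro _ ⟨w, hw, rfl⟩ B hB
      rw [← key B hB]
      exact ⟨w, hw B hB, rfl⟩
    · intro x hx
      refine ⟨k⁻¹ x, ?_, by simp⟩
      intro B hB
      have hxB : x ∈ k '' B := by rw [key B hB]; exact hx B hB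
      obtain ⟨w, hw, hwx⟩ := hxB
      have : k⁻¹ x = w := by rw [← hwx]; simp
      rwa [this]

/-- image of the coset `L` under any element of `K` is the right coset of the image of 1 -/
lemma image_L (K : Subgroup (Equiv.Perm G)) (L : Subgroup G)
    (hL : (L : Set G) = minBlock K) (hGK : starGroup (⊤ : Subgroup G) ≤ K)
    (k : Equiv.Perm G) (hk : k ∈ K) : k '' (L : Set G) = rcoset L (k 1) := by
  have hmem : (Equiv.mulRight (k 1)⁻¹ * k) ∈ K :=
    K.mul_mem (mulRight_mem_K hGK (k 1)⁻¹) hk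
  have hblock := L_isBlock K L hL (Equiv.mulRight (k 1)⁻¹ * k) hmem
  have h1 : (1 : G) ∈ (Equiv.mulRight (k 1)⁻¹ * k) '' (L : Set G) := by
    refine ⟨1, L.one_mem, ?_⟩
    simp [Equiv.Perm.mul_apply]
  have heq : (Equiv.mulRight (k 1)⁻¹ * k) '' (L : Set G) = (L : Set G) := by
    rcases hblock with h | h
    · exact h
    · exfalso
      have : (1 : G) ∈ (Equiv.mulRight (k 1)⁻¹ * k) '' (L : Set G) ∩ (L : Set G) :=
        ⟨h1, L.one_mem⟩
      rw [h] at this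
      exact this
  -- now k '' L = (mulRight (k 1)) '' ((mulRight (k 1)⁻¹ * k) '' L) = (mulRight (k 1)) '' L
  ext x
  constructor
  · rintro ⟨w, hw, rfl⟩
    show k w * (k 1)⁻¹ ∈ L
    have : (Equiv.mulRight (k 1)⁻¹ * k) w ∈ (L : Set G) := by
      have hmem2 : (Equiv.mulRight (k 1)⁻¹ * k) w ∈ (Equiv.mulRight (k 1)⁻¹ * k) '' (L : Set G) :=
        ⟨w, hw, rfl⟩
      rwa [heq] at hmem2
    simpa [Equiv.Perm.mul_apply] using this
  · intro hx
    have hx' : x * (k 1)⁻¹ ∈ (L : Set G) := hx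
    rw [← heq] at hx'
    obtain ⟨w, hw, hwx⟩ := hx'
    simp only [Equiv.Perm.mul_apply, Equiv.coe_mulRight] at hwx
    refine ⟨w, hw, ?_⟩
    have : k w * (k 1)⁻¹ * (k 1) = x * (k 1)⁻¹ * (k 1) := by rw [hwx]
    simpa using this

lemma rcoset_eq_image (L : Subgroup G) (v : G) :
    rcoset L v = (Equiv.mulRight v) '' (L : Set G) := by
  ext x
  constructor
  · intro hx
    exact ⟨x * v⁻¹, hx, by simp⟩
  · rintro ⟨l, hl, rfl⟩
    show (Equiv.mulRight v) l * v⁻¹ ∈ L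
    simpa using hl

lemma image_rcoset (K : Subgroup (Equiv.Perm G)) (L : Subgroup G)
    (hL : (L : Set G) = minBlock K) (hGK : starGroup (⊤ : Subgroup G) ≤ K)
    (k : Equiv.Perm G) (hk : k ∈ K) (v : G) :
    k '' rcoset L v = rcoset L (k v) := by
  rw [rcoset_eq_image, ← Set.image_comp]
  have hcomp : (⇑k ∘ ⇑(Equiv.mulRight v)) = ⇑(k * Equiv.mulRight v) := by
    ext x; simp [Equiv.Perm.mul_apply]
  rw [hcomp, image_L K L hL hGK _ (K.mul_mem hk (mulRight_mem_K hGK v))]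
  simp [Equiv.Perm.mul_apply]

lemma mem_rcoset_self (L : Subgroup G) (v : G) : v ∈ rcoset L v := by
  show v * v⁻¹ ∈ L
  simp [L.one_mem]

lemma coset_mem_map (K : Subgroup (Equiv.Perm G)) (L : Subgroup G)
    (hL : (L : Set G) = minBlock K) (hGK : starGroup (⊤ : Subgroup G) ≤ K)
    (k : Equiv.Perm G) (hk : k ∈ K) {x v : G} (h : x * v⁻¹ ∈ L) :
    k x * (k v)⁻¹ ∈ L := by
  have : k x ∈ rcoset L (k v) := by
    rw [← image_rcoset K L hL hGK k hk v]
    exact ⟨x, h, rfl⟩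
  exact this

lemma L_conj (K : Subgroup (Equiv.Perm G)) (L : Subgroup G)
    (hL : (L : Set G) = minBlock K) (hGK : starGroup (⊤ : Subgroup G) ≤ K)
    (g : G) {l : G} (hl : l ∈ L) : g * l * g⁻¹ ∈ L := by
  have h : l * (1 : G)⁻¹ ∈ L := by simpa using hl
  have := coset_mem_map K L hL hGK _ (conjPerm_mem_K hGK g) h
  simpa [Equiv.Perm.mul_apply, mul_assoc] using this

end AuxChunkB
section AuxChunkC
set_option linter.unusedSectionVars false

variable {G : Type*} [Group G] [Fintype G]

lemma H_conj (K : Subgroup (Equiv.Perm G)) (L : Subgroup G)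
    (hL : (L : Set G) = minBlock K) (hGK : starGroup (⊤ : Subgroup G) ≤ K)
    (k : Equiv.Perm G) (hk : k ∈ K) {h : Equiv.Perm G} (hh : h ∈ stabCosets K L) :
    k⁻¹ * h * k ∈ stabCosets K L := by
  obtain ⟨hhK, hhL⟩ := hh
  refine ⟨K.mul_mem (K.mul_mem (K.inv_mem hk) hhK) hk, fun x => ?_⟩
  have h1 : h (k x) * (k x)⁻¹ ∈ L := hhL (k x)
  have h2 := coset_mem_map K L hL hGK k⁻¹ (K.inv_mem hk) h1
  simpa [Equiv.Perm.mul_apply] using h2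

lemma ce_image (K : Subgroup (Equiv.Perm G)) (L : Subgroup G)
    (hL : (L : Set G) = minBlock K) (hGK : starGroup (⊤ : Subgroup G) ≤ K)
    (k : Equiv.Perm G) (hk : k ∈ K) {X Y : Set G} (hXY : cosetEquiv K L X Y) :
    cosetEquiv K L (k '' X) (k '' Y) := by
  intro f hf
  have key : ∀ Z : Set G, ((∀ x ∈ k '' Z, f x = x) ↔ (∀ x ∈ Z, (k⁻¹ * f * k) x = x)) := by
    intro Z
    constructor
    · intro hfix x hx
      have : f (k x) = k x := hfix (k x) ⟨x, hx, rfl⟩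
      simp [Equiv.Perm.mul_apply, this]
    · rintro hfix _ ⟨x, hx, rfl⟩
      have := hfix x hx
      simp only [Equiv.Perm.mul_apply] at this
      have happ : k ((k⁻¹) (f (k x))) = k x := congrArg k this
      simpa using happ
  rw [key X, key Y]
  exact hXY (k⁻¹ * f * k) (H_conj K L hL hGK k hk hf)

lemma rcoset_one (L : Subgroup G) : rcoset L (1 : G) = (L : Set G) := by
  ext x; show x * (1 : G)⁻¹ ∈ L ↔ x ∈ L; simp

lemma rcoset_eq_L (L : Subgroup G) {l : G} (hl : l ∈ L) : rcoset L l = (L : Set G) := by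
  ext x
  show x * l⁻¹ ∈ L ↔ x ∈ L
  constructor
  · intro h
    have := L.mul_mem h hl
    simpa using this
  · intro h
    exact L.mul_mem h (L.inv_mem hl)

lemma L_le_U (K : Subgroup (Equiv.Perm G)) (L U : Subgroup G)
    (hU : (U : Set G) = Uset K L) {l : G} (hl : l ∈ L) : l ∈ U := by
  have : l ∈ Uset K L := by
    show cosetEquiv K L (L : Set G) (rcoset L l)
    rw [rcoset_eq_L L hl]
    intro f _
    exact Iff.rfl
  rw [← SetLike.mem_coe, hU]
  exact this

lemma mem_U_iff (K : Subgroup (Equiv.Perm G)) (L U : Subgroup G)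
    (hL : (L : Set G) = minBlock K) (hU : (U : Set G) = Uset K L)
    (hGK : starGroup (⊤ : Subgroup G) ≤ K) (u z : G) :
    z * u⁻¹ ∈ U ↔ cosetEquiv K L (rcoset L u) (rcoset L z) := by
  constructor
  · intro h
    have h1 : (z * u⁻¹) ∈ Uset K L := by rw [← hU]; exact h
    have h2 : cosetEquiv K L (L : Set G) (rcoset L (z * u⁻¹)) := h1
    have h3 := ce_image K L hL hGK (Equiv.mulRight u) (mulRight_mem_K hGK u) h2
    have e1 : (Equiv.mulRight u) '' (L : Set G) = rcoset L u := by
      rw [← rcoset_eq_image]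
    have e2 : (Equiv.mulRight u) '' rcoset L (z * u⁻¹) = rcoset L z := by
      rw [image_rcoset K L hL hGK _ (mulRight_mem_K hGK u)]
      simp
    rwa [e1, e2] at h3
  · intro h
    have h3 := ce_image K L hL hGK (Equiv.mulRight u⁻¹) (mulRight_mem_K hGK u⁻¹) h
    have e1 : (Equiv.mulRight u⁻¹) '' rcoset L u = (L : Set G) := by
      rw [image_rcoset K L hL hGK _ (mulRight_mem_K hGK u⁻¹)]
      simp only [Equiv.coe_mulRight]
      rw [mul_inv_cancel, rcoset_one]
    have e2 : (Equiv.mulRight u⁻¹) '' rcoset L z = rcoset L (z * u⁻¹) := by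
      rw [image_rcoset K L hL hGK _ (mulRight_mem_K hGK u⁻¹)]
      rfl
    rw [e1, e2] at h3
    rw [← SetLike.mem_coe, hU]
    exact h3

lemma classInv (K : Subgroup (Equiv.Perm G)) (L U : Subgroup G)
    (hL : (L : Set G) = minBlock K) (hU : (U : Set G) = Uset K L)
    (hGK : starGroup (⊤ : Subgroup G) ≤ K)
    (k : Equiv.Perm G) (hk : k ∈ K) (u z : G) :
    z * u⁻¹ ∈ U ↔ (k z) * (k u)⁻¹ ∈ U := by
  rw [mem_U_iff K L U hL hU hGK u z, mem_U_iff K L U hL hU hGK (k u) (k z)]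
  constructor
  · intro h
    have := ce_image K L hL hGK k hk h
    rwa [image_rcoset K L hL hGK k hk, image_rcoset K L hL hGK k hk] at this
  · intro h
    have := ce_image K L hL hGK k⁻¹ (K.inv_mem hk) h
    rwa [image_rcoset K L hL hGK k⁻¹ (K.inv_mem hk), image_rcoset K L hL hGK k⁻¹ (K.inv_mem hk),
      Equiv.Perm.inv_def, Equiv.symm_apply_apply, Equiv.symm_apply_apply] at this

end AuxChunkC
section AuxChunkD
set_option linter.unusedSectionVars false

variable {G : Type*} [Group G] [Fintype G]

/-- The auxiliary relation: `u`, `v` in the same right `L`-coset, and for every point `x`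
outside the `U`-class of `u` there is an element of `K` fixing `x` and carrying `u` to `v`. -/
def Rel2 (K : Subgroup (Equiv.Perm G)) (L U : Subgroup G) (u v : G) : Prop :=
  u * v⁻¹ ∈ L ∧ ∀ x : G, x * u⁻¹ ∉ U → ∃ k ∈ K, (k : Equiv.Perm G) x = x ∧ k u = v

lemma rel2_refl (K : Subgroup (Equiv.Perm G)) (L U : Subgroup G) (u : G) :
    Rel2 K L U u u :=
  ⟨by simp [L.one_mem], fun x _ => ⟨1, K.one_mem, by simp, by simp⟩⟩

lemma rel2_same_class {K : Subgroup (Equiv.Perm G)} {L U : Subgroup G}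
    (hLU : ∀ l ∈ L, l ∈ U) {u v : G} (h : Rel2 K L U u v) (x : G) :
    x * u⁻¹ ∈ U ↔ x * v⁻¹ ∈ U := by
  have hL : u * v⁻¹ ∈ U := hLU _ h.1
  constructor
  · intro hx
    have : x * u⁻¹ * (u * v⁻¹) ∈ U := U.mul_mem hx hL
    have e : x * u⁻¹ * (u * v⁻¹) = x * v⁻¹ := by group
    rwa [e] at this
  · intro hx
    have : x * v⁻¹ * (u * v⁻¹)⁻¹ ∈ U := U.mul_mem hx (U.inv_mem hL)
    have e : x * v⁻¹ * (u * v⁻¹)⁻¹ = x * u⁻¹ := by group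
    rwa [e] at this

lemma rel2_symm {K : Subgroup (Equiv.Perm G)} {L U : Subgroup G}
    (hLU : ∀ l ∈ L, l ∈ U) {u v : G} (h : Rel2 K L U u v) : Rel2 K L U v u := by
  refine ⟨by simpa using L.inv_mem h.1, fun x hx => ?_⟩
  have hx' : x * u⁻¹ ∉ U := by
    rw [rel2_same_class hLU h x]; exact hx
  obtain ⟨k, hk, hkx, hku⟩ := h.2 x hx'
  refine ⟨k⁻¹, K.inv_mem hk, ?_, ?_⟩
  · rw [Equiv.Perm.inv_def, Equiv.symm_apply_eq]; exact hkx.symm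
  · rw [Equiv.Perm.inv_def, Equiv.symm_apply_eq]; exact hku.symm

lemma rel2_trans {K : Subgroup (Equiv.Perm G)} {L U : Subgroup G}
    (hLU : ∀ l ∈ L, l ∈ U) {u v t : G} (h1 : Rel2 K L U u v) (h2 : Rel2 K L U v t) :
    Rel2 K L U u t := by
  constructor
  · have := L.mul_mem h1.1 h2.1
    have e : u * v⁻¹ * (v * t⁻¹) = u * t⁻¹ := by group
    rwa [e] at this
  · intro x hx
    obtain ⟨k1, hk1, hk1x, hk1u⟩ := h1.2 x hx
    have hx' : x * v⁻¹ ∉ U := by rw [← rel2_same_class hLU h1 x]; exact hx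
    obtain ⟨k2, hk2, hk2x, hk2v⟩ := h2.2 x hx'
    refine ⟨k2 * k1, K.mul_mem hk2 hk1, ?_, ?_⟩
    · simp [Equiv.Perm.mul_apply, hk1x, hk2x]
    · simp [Equiv.Perm.mul_apply, hk1u, hk2v]

lemma rel2_map (K : Subgroup (Equiv.Perm G)) (L U : Subgroup G)
    (hL : (L : Set G) = minBlock K) (hU : (U : Set G) = Uset K L)
    (hGK : starGroup (⊤ : Subgroup G) ≤ K)
    (k : Equiv.Perm G) (hk : k ∈ K) {u v : G} (h : Rel2 K L U u v) :
    Rel2 K L U (k u) (k v) := by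
  constructor
  · exact coset_mem_map K L hL hGK k hk h.1
  · intro x hx
    have hx' : (k⁻¹ x) * u⁻¹ ∉ U := by
      intro hmem
      apply hx
      have := (classInv K L U hL hU hGK k hk u (k⁻¹ x)).1 hmem
      simpa using this
    obtain ⟨k0, hk0, hk0x, hk0u⟩ := h.2 (k⁻¹ x) hx'
    refine ⟨k * k0 * k⁻¹, K.mul_mem (K.mul_mem hk hk0) (K.inv_mem hk), ?_, ?_⟩
    · show k (k0 (k⁻¹ x)) = x
      rw [hk0x]; simp
    · simp [Equiv.Perm.mul_apply, hk0u]

/-- the Rel2-class of 1 -/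
def Wset (K : Subgroup (Equiv.Perm G)) (L U : Subgroup G) : Set G :=
  {z : G | Rel2 K L U z 1}

lemma Wset_sub_L {K : Subgroup (Equiv.Perm G)} {L U : Subgroup G} :
    Wset K L U ⊆ (L : Set G) := by
  intro z hz
  have := hz.1
  simpa using this

lemma one_mem_Wset (K : Subgroup (Equiv.Perm G)) (L U : Subgroup G) :
    (1 : G) ∈ Wset K L U := rel2_refl K L U 1

lemma Wset_isBlock (K : Subgroup (Equiv.Perm G)) (L U : Subgroup G)
    (hL : (L : Set G) = minBlock K) (hU : (U : Set G) = Uset K L)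
    (hGK : starGroup (⊤ : Subgroup G) ≤ K) : IsBlock K (Wset K L U) := by
  have hLU : ∀ l ∈ L, l ∈ U := fun l hl => L_le_U K L U hU hl
  intro k hk
  by_cases hd : k '' Wset K L U ∩ Wset K L U = ∅
  · right; exact hd
  · left
    obtain ⟨z, hz1, hz2⟩ := Set.nonempty_iff_ne_empty.2 hd
    -- z = k w with Rel2 w 1, and Rel2 z 1
    have hk1 : Rel2 K L U (k 1) 1 := by
      obtain ⟨w, hw, rfl⟩ := hz1
      have h1 : Rel2 K L U (k w) (k 1) := rel2_map K L U hL hU hGK k hk hw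
      exact rel2_trans hLU (rel2_symm hLU h1) hz2
    ext x
    constructor
    · rintro ⟨w, hw, rfl⟩
      have h1 : Rel2 K L U (k w) (k 1) := rel2_map K L U hL hU hGK k hk hw
      exact rel2_trans hLU h1 hk1
    · intro hx
      refine ⟨k⁻¹ x, ?_, by simp⟩
      have h1 : Rel2 K L U x (k 1) := rel2_trans hLU hx (rel2_symm hLU hk1)
      have h2 : Rel2 K L U (k⁻¹ x) (k⁻¹ (k 1)) := rel2_map K L U hL hU hGK k⁻¹ (K.inv_mem hk) h1
      simpa [Wset] using h2

lemma Wset_dichotomy (K : Subgroup (Equiv.Perm G)) (L U : Subgroup G)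
    (hL : (L : Set G) = minBlock K) (hU : (U : Set G) = Uset K L)
    (hGK : starGroup (⊤ : Subgroup G) ≤ K) :
    (∀ z ∈ L, Rel2 K L U z 1) ∨ (∀ z : G, Rel2 K L U z 1 → z = 1) := by
  by_cases hnt : ∃ z ∈ Wset K L U, z ≠ (1 : G)
  · left
    obtain ⟨z, hz, hzne⟩ := hnt
    have hcard : 2 ≤ (Wset K L U).ncard := by
      have hsub : ({(1 : G), z} : Set G) ⊆ Wset K L U := by
        intro x hx
        rcases hx with h | h
        · rw [h]; exact one_mem_Wset K L U
        · rw [h]; exact hz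
      have := Set.ncard_le_ncard hsub (Set.toFinite _)
      rwa [Set.ncard_pair (Ne.symm hzne)] at this
    have hWfam : Wset K L U ∈ blockFam K :=
      ⟨Wset_isBlock K L U hL hU hGK, one_mem_Wset K L U, hcard⟩
    intro w hw
    have h1 : w ∈ minBlock K := by
      rw [← hL]; exact hw
    have : w ∈ Wset K L U := h1 (Wset K L U) hWfam
    exact this
  · right
    push_neg at hnt
    intro z hz
    exact hnt z hz

end AuxChunkD
section AuxChunkE
set_option linter.unusedSectionVars false

variable {G : Type*} [Group G] [Fintype G]

lemma good_T (K : Subgroup (Equiv.Perm G)) (L U : Subgroup G)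
    (hL : (L : Set G) = minBlock K) (hU : (U : Set G) = Uset K L)
    (hGK : starGroup (⊤ : Subgroup G) ≤ K)
    (hW : ∀ z ∈ L, Rel2 K L U z 1) :
    ∀ u v x : G, u * v⁻¹ ∈ L → x * u⁻¹ ∉ U → ∃ k ∈ K, (k : Equiv.Perm G) x = x ∧ k u = v := by
  have hLU : ∀ l ∈ L, l ∈ U := fun l hl => L_le_U K L U hU hl
  intro u v x huv hxu
  have hzL : u⁻¹ * v ∈ L := by
    have h1 : v * u⁻¹ ∈ L := by simpa using L.inv_mem huv
    have h2 := L_conj K L hL hGK u⁻¹ h1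
    have e : u⁻¹ * (v * u⁻¹) * (u⁻¹)⁻¹ = u⁻¹ * v := by group
    rwa [e] at h2
  have hz1 : Rel2 K L U (u⁻¹ * v) 1 := hW _ hzL
  have h1z : Rel2 K L U 1 (u⁻¹ * v) := rel2_symm hLU hz1
  have hx' : (u⁻¹ * x) * (1 : G)⁻¹ ∉ U := by
    intro hmem
    apply hxu
    have := (classInv K L U hL hU hGK (Equiv.mulLeft u) (mulLeft_mem_K hGK u) 1 (u⁻¹ * x)).1 hmem
    simp only [Equiv.coe_mulLeft] at this
    have e : u * (u⁻¹ * x) * (u * 1)⁻¹ = x * u⁻¹ := by group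
    rwa [e] at this
  obtain ⟨k0, hk0, hk0x, hk01⟩ := h1z.2 (u⁻¹ * x) hx'
  refine ⟨Equiv.mulLeft u * k0 * Equiv.mulLeft u⁻¹,
    K.mul_mem (K.mul_mem (mulLeft_mem_K hGK u) hk0) (mulLeft_mem_K hGK u⁻¹), ?_, ?_⟩
  · simp only [Equiv.Perm.mul_apply, Equiv.coe_mulLeft, hk0x]
    group
  · simp only [Equiv.Perm.mul_apply, Equiv.coe_mulLeft]
    rw [inv_mul_cancel, hk01]
    group

lemma rel2_eq (K : Subgroup (Equiv.Perm G)) (L U : Subgroup G)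
    (hL : (L : Set G) = minBlock K) (hU : (U : Set G) = Uset K L)
    (hGK : starGroup (⊤ : Subgroup G) ≤ K)
    (h1 : ∀ z : G, Rel2 K L U z 1 → z = 1) {u v : G} (h : Rel2 K L U u v) : u = v := by
  have hLU : ∀ l ∈ L, l ∈ U := fun l hl => L_le_U K L U hU hl
  have h2 := rel2_map K L U hL hU hGK (Equiv.mulLeft u⁻¹) (mulLeft_mem_K hGK u⁻¹) h
  simp only [Equiv.coe_mulLeft] at h2
  rw [inv_mul_cancel] at h2
  have h3 := rel2_symm hLU h2
  have h4 := h1 _ h3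
  exact inv_mul_eq_one.mp h4

/-- the subgroup-to-be of displacements compatible with all points of the class of `x₀`,
at base point `u₀` -/
def Fset (K : Subgroup (Equiv.Perm G)) (L U : Subgroup G) (x₀ u₀ : G) : Set G :=
  {l : G | l ∈ L ∧ ∀ x : G, x * x₀⁻¹ ∈ U →
    ∃ k ∈ K, (k : Equiv.Perm G) x = x ∧ k u₀ = l * u₀}

lemma Fset_one (K : Subgroup (Equiv.Perm G)) (L U : Subgroup G) (x₀ u₀ : G) :
    (1 : G) ∈ Fset K L U x₀ u₀ :=
  ⟨L.one_mem, fun x _ => ⟨1, K.one_mem, by simp, by simp⟩⟩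

lemma Fset_mul (K : Subgroup (Equiv.Perm G)) (L U : Subgroup G)
    (hL : (L : Set G) = minBlock K) (hU : (U : Set G) = Uset K L)
    (hGK : starGroup (⊤ : Subgroup G) ≤ K) (x₀ u₀ : G)
    {lam mu : G} (hlam : lam ∈ Fset K L U x₀ u₀) (hmu : mu ∈ Fset K L U x₀ u₀) :
    lam * mu ∈ Fset K L U x₀ u₀ := by
  obtain ⟨hlamL, hlam2⟩ := hlam
  obtain ⟨hmuL, hmu2⟩ := hmu
  refine ⟨L.mul_mem hlamL hmuL, fun x hx => ?_⟩
  have hrL : u₀⁻¹ * mu * u₀ ∈ L := by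
    have := L_conj K L hL hGK u₀⁻¹ hmuL
    simpa using this
  have hx'' : (x * (u₀⁻¹ * mu * u₀)⁻¹) * x₀⁻¹ ∈ U := by
    have h1 : x₀ * (u₀⁻¹ * mu * u₀)⁻¹ * x₀⁻¹ ∈ U :=
      L_le_U K L U hU (L_conj K L hL hGK x₀ (L.inv_mem hrL))
    have e : (x * x₀⁻¹) * (x₀ * (u₀⁻¹ * mu * u₀)⁻¹ * x₀⁻¹) = (x * (u₀⁻¹ * mu * u₀)⁻¹) * x₀⁻¹ := by
      group
    rw [← e]; exact U.mul_mem hx h1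
  obtain ⟨ka, hka, hkax, hkau⟩ := hlam2 (x * (u₀⁻¹ * mu * u₀)⁻¹) hx''
  obtain ⟨kb, hkb, hkbx, hkbu⟩ := hmu2 x hx
  refine ⟨Equiv.mulRight (u₀⁻¹ * mu * u₀) * ka * Equiv.mulRight (u₀⁻¹ * mu * u₀)⁻¹ * kb,
    K.mul_mem (K.mul_mem (K.mul_mem (mulRight_mem_K hGK _) hka) (mulRight_mem_K hGK _)) hkb,
    ?_, ?_⟩
  · simp only [Equiv.Perm.mul_apply, Equiv.coe_mulRight, hkbx, hkax]
    group
  · simp only [Equiv.Perm.mul_apply, Equiv.coe_mulRight, hkbu]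
    have e2 : mu * u₀ * (u₀⁻¹ * mu * u₀)⁻¹ = u₀ := by group
    rw [e2, hkau]
    group

lemma Fset_inv (K : Subgroup (Equiv.Perm G)) (L U : Subgroup G)
    (hL : (L : Set G) = minBlock K) (hU : (U : Set G) = Uset K L)
    (hGK : starGroup (⊤ : Subgroup G) ≤ K) (x₀ u₀ : G)
    {lam : G} (hlam : lam ∈ Fset K L U x₀ u₀) : lam⁻¹ ∈ Fset K L U x₀ u₀ := by
  obtain ⟨hlamL, hlam2⟩ := hlam
  refine ⟨L.inv_mem hlamL, fun x hx => ?_⟩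
  have hrL : u₀⁻¹ * lam⁻¹ * u₀ ∈ L := by
    have := L_conj K L hL hGK u₀⁻¹ (L.inv_mem hlamL)
    simpa using this
  have hx'' : (x * (u₀⁻¹ * lam⁻¹ * u₀)⁻¹) * x₀⁻¹ ∈ U := by
    have h1 : x₀ * (u₀⁻¹ * lam⁻¹ * u₀)⁻¹ * x₀⁻¹ ∈ U :=
      L_le_U K L U hU (L_conj K L hL hGK x₀ (L.inv_mem hrL))
    have e : (x * x₀⁻¹) * (x₀ * (u₀⁻¹ * lam⁻¹ * u₀)⁻¹ * x₀⁻¹)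
        = (x * (u₀⁻¹ * lam⁻¹ * u₀)⁻¹) * x₀⁻¹ := by group
    rw [← e]; exact U.mul_mem hx h1
  obtain ⟨ka, hka, hkax, hkau⟩ := hlam2 (x * (u₀⁻¹ * lam⁻¹ * u₀)⁻¹) hx''
  have hkainvx : ka⁻¹ (x * (u₀⁻¹ * lam⁻¹ * u₀)⁻¹) = x * (u₀⁻¹ * lam⁻¹ * u₀)⁻¹ := by
    rw [Equiv.Perm.inv_def, Equiv.symm_apply_eq]; exact hkax.symm
  have hkainvu : ka⁻¹ (lam * u₀) = u₀ := by
    rw [Equiv.Perm.inv_def, Equiv.symm_apply_eq]; exact hkau.symm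
  refine ⟨Equiv.mulRight (u₀⁻¹ * lam⁻¹ * u₀) * ka⁻¹ * Equiv.mulRight (u₀⁻¹ * lam⁻¹ * u₀)⁻¹,
    K.mul_mem (K.mul_mem (mulRight_mem_K hGK _) (K.inv_mem hka)) (mulRight_mem_K hGK _),
    ?_, ?_⟩
  · simp only [Equiv.Perm.mul_apply, Equiv.coe_mulRight, hkainvx]
    group
  · simp only [Equiv.Perm.mul_apply, Equiv.coe_mulRight]
    have e2 : u₀ * (u₀⁻¹ * lam⁻¹ * u₀)⁻¹ = lam * u₀ := by group
    rw [e2, hkainvu]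
    group

lemma Fset_conj (K : Subgroup (Equiv.Perm G)) (L U : Subgroup G)
    (hL : (L : Set G) = minBlock K) (hU : (U : Set G) = Uset K L)
    (hGK : starGroup (⊤ : Subgroup G) ≤ K) (x₀ u₀ : G)
    {mu lam : G} (hmu : mu ∈ L) (hlam : lam ∈ Fset K L U x₀ u₀) :
    mu * lam * mu⁻¹ ∈ Fset K L U x₀ u₀ := by
  obtain ⟨hlamL, hlam2⟩ := hlam
  refine ⟨L.mul_mem (L.mul_mem hmu hlamL) (L.inv_mem hmu), fun x hx => ?_⟩
  have hrL : u₀⁻¹ * mu⁻¹ * u₀ ∈ L := by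
    have := L_conj K L hL hGK u₀⁻¹ (L.inv_mem hmu)
    simpa using this
  have hz : (x * (u₀⁻¹ * mu⁻¹ * u₀)⁻¹) * x₀⁻¹ ∈ U := by
    have h1 : x₀ * (u₀⁻¹ * mu⁻¹ * u₀)⁻¹ * x₀⁻¹ ∈ U :=
      L_le_U K L U hU (L_conj K L hL hGK x₀ (L.inv_mem hrL))
    have e : (x * x₀⁻¹) * (x₀ * (u₀⁻¹ * mu⁻¹ * u₀)⁻¹ * x₀⁻¹)
        = (x * (u₀⁻¹ * mu⁻¹ * u₀)⁻¹) * x₀⁻¹ := by group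
    rw [← e]; exact U.mul_mem hx h1
  have hx'' : (mu⁻¹ * (x * (u₀⁻¹ * mu⁻¹ * u₀)⁻¹)) * x₀⁻¹ ∈ U := by
    have h2 : mu⁻¹ ∈ U := U.inv_mem (L_le_U K L U hU hmu)
    have e : mu⁻¹ * ((x * (u₀⁻¹ * mu⁻¹ * u₀)⁻¹) * x₀⁻¹)
        = (mu⁻¹ * (x * (u₀⁻¹ * mu⁻¹ * u₀)⁻¹)) * x₀⁻¹ := by group
    rw [← e]; exact U.mul_mem h2 hz
  obtain ⟨ka, hka, hkax, hkau⟩ := hlam2 (mu⁻¹ * (x * (u₀⁻¹ * mu⁻¹ * u₀)⁻¹)) hx''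
  refine ⟨Equiv.mulRight (u₀⁻¹ * mu⁻¹ * u₀) *
      (Equiv.mulLeft mu * ka * Equiv.mulLeft mu⁻¹) *
      Equiv.mulRight (u₀⁻¹ * mu⁻¹ * u₀)⁻¹,
    K.mul_mem (K.mul_mem (mulRight_mem_K hGK _)
      (K.mul_mem (K.mul_mem (mulLeft_mem_K hGK _) hka) (mulLeft_mem_K hGK _)))
      (mulRight_mem_K hGK _), ?_, ?_⟩
  · simp only [Equiv.Perm.mul_apply, Equiv.coe_mulRight, Equiv.coe_mulLeft, hkax]
    group
  · simp only [Equiv.Perm.mul_apply, Equiv.coe_mulRight, Equiv.coe_mulLeft]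
    have e2 : mu⁻¹ * (u₀ * (u₀⁻¹ * mu⁻¹ * u₀)⁻¹) = u₀ := by group
    rw [e2, hkau]
    group

lemma Fset_dich (S : Subgroup G) (hSnormal : S.Normal) (hSsimple : IsSimpleGroup S)
    (hSnonabelian : ¬ ∀ a b : S, a * b = b * a)
    (hScent : ∀ g : G, (∀ s ∈ S, g * s = s * g) → g = 1)
    (K : Subgroup (Equiv.Perm G)) (L U : Subgroup G)
    (hL : (L : Set G) = minBlock K) (hU : (U : Set G) = Uset K L)
    (hGK : starGroup (⊤ : Subgroup G) ≤ K) (x₀ u₀ : G)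
    (hnt : ∃ l ∈ Fset K L U x₀ u₀, l ≠ (1 : G)) : ∀ s ∈ S, s ∈ Fset K L U x₀ u₀ := by
  let N : Subgroup G :=
    { carrier := Fset K L U x₀ u₀
      one_mem' := Fset_one K L U x₀ u₀
      mul_mem' := fun {a b} ha hb => Fset_mul K L U hL hU hGK x₀ u₀ ha hb
      inv_mem' := fun {a} ha => Fset_inv K L U hL hU hGK x₀ u₀ ha }
  have := normal_ge_S S hSnormal hSsimple hScent L
    (S_le_L S hSnormal hSsimple hScent K hGK L hL) N
    (fun l hl n hn => Fset_conj K L U hL hU hGK x₀ u₀ hl hn) hnt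
  exact this

lemma sep_exists (S : Subgroup G) (hSnormal : S.Normal) (hSsimple : IsSimpleGroup S)
    (hSnonabelian : ¬ ∀ a b : S, a * b = b * a)
    (hScent : ∀ g : G, (∀ s ∈ S, g * s = s * g) → g = 1)
    (K : Subgroup (Equiv.Perm G)) (L U : Subgroup G)
    (hL : (L : Set G) = minBlock K) (hU : (U : Set G) = Uset K L)
    (hGK : starGroup (⊤ : Subgroup G) ≤ K)
    (h1 : ∀ z : G, Rel2 K L U z 1 → z = 1) :
    ∀ u₀ : G, ∃ x₀ : G, x₀ * u₀⁻¹ ∉ U ∧ ∀ l ∈ Fset K L U x₀ u₀, l = 1 := by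
  intro u₀
  by_contra hcon
  push_neg at hcon
  obtain ⟨s, hsS, hsne⟩ := exists_S_ne_one S hSnonabelian
  have hrel : Rel2 K L U u₀ (s * u₀) := by
    constructor
    · have e : u₀ * (s * u₀)⁻¹ = s⁻¹ := by group
      rw [e]
      exact L.inv_mem (S_le_L S hSnormal hSsimple hScent K hGK L hL s hsS)
    · intro x hx
      obtain ⟨l, hl, hlne⟩ := hcon x hx
      have hs_in : s ∈ Fset K L U x u₀ :=
        Fset_dich S hSnormal hSsimple hSnonabelian hScent K L U hL hU hGK x u₀ ⟨l, hl, hlne⟩ s hsS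
      have hxx : x * x⁻¹ ∈ U := by simp [U.one_mem]
      exact hs_in.2 x hxx
  have heq := rel2_eq K L U hL hU hGK h1 hrel
  exact hsne (by
    have : (1 : G) * u₀ = s * u₀ := by rw [one_mul, ← heq]
    exact (mul_right_cancel this).symm)

end AuxChunkE
section AuxChunkF
set_option linter.unusedSectionVars false

variable {G : Type*} [Group G] [Fintype G]

lemma boot (K : Subgroup (Equiv.Perm G)) (L U : Subgroup G)
    (hL : (L : Set G) = minBlock K) (hU : (U : Set G) = Uset K L)
    (hGK : starGroup (⊤ : Subgroup G) ≤ K) (x₀ u₀ : G)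
    (hsep : ∀ l ∈ Fset K L U x₀ u₀, l = 1) :
    ∀ g : Equiv.Perm G, g ∈ stabCosets K L → (∀ x : G, x * x₀⁻¹ ∈ U → g x = x) →
      ∀ v : G, v * u₀⁻¹ ∈ L → g v = v := by
  intro g hg hfix v hv
  have hlamL : g v * v⁻¹ ∈ L := hg.2 v
  have hmem : (v * u₀⁻¹)⁻¹ * (g v * v⁻¹) * (v * u₀⁻¹) ∈ Fset K L U x₀ u₀ := by
    constructor
    · exact L.mul_mem (L.mul_mem (L.inv_mem hv) hlamL) hv
    · intro x hx
      have hclass : ((v * u₀⁻¹) * x) * x₀⁻¹ ∈ U := by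
        have h1 : v * u₀⁻¹ ∈ U := L_le_U K L U hU hv
        have e : (v * u₀⁻¹) * (x * x₀⁻¹) = ((v * u₀⁻¹) * x) * x₀⁻¹ := by group
        rw [← e]; exact U.mul_mem h1 hx
      refine ⟨Equiv.mulLeft (v * u₀⁻¹)⁻¹ * g * Equiv.mulLeft (v * u₀⁻¹),
        K.mul_mem (K.mul_mem (mulLeft_mem_K hGK _) hg.1) (mulLeft_mem_K hGK _), ?_, ?_⟩
      · simp only [Equiv.Perm.mul_apply, Equiv.coe_mulLeft]
        rw [hfix ((v * u₀⁻¹) * x) hclass]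
        group
      · simp only [Equiv.Perm.mul_apply, Equiv.coe_mulLeft]
        have e : (v * u₀⁻¹) * u₀ = v := by group
        rw [e]
        have e2 : g v = (g v * v⁻¹) * v := by group
        rw [e2]
        group
  have := hsep _ hmem
  have hlam1 : g v * v⁻¹ = 1 := by
    have h2 : (v * u₀⁻¹) * ((v * u₀⁻¹)⁻¹ * (g v * v⁻¹) * (v * u₀⁻¹)) * (v * u₀⁻¹)⁻¹
        = g v * v⁻¹ := by group
    rw [← h2, this]
    group
  exact mul_inv_eq_one.mp hlam1

/-- pointwise stabilizer (inside `K_𝔏`) of the `U`-class of `u` -/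
def StabSet (K : Subgroup (Equiv.Perm G)) (L U : Subgroup G) (u : G) : Set (Equiv.Perm G) :=
  {g : Equiv.Perm G | g ∈ stabCosets K L ∧ ∀ x ∈ rcoset U u, g x = x}

lemma coset_fix_to_class (K : Subgroup (Equiv.Perm G)) (L U : Subgroup G)
    (hL : (L : Set G) = minBlock K) (hU : (U : Set G) = Uset K L)
    (hGK : starGroup (⊤ : Subgroup G) ≤ K) (u : G)
    {g : Equiv.Perm G} (hg : g ∈ stabCosets K L)
    (hfix : ∀ w ∈ rcoset L u, g w = w) : g ∈ StabSet K L U u := by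
  refine ⟨hg, fun x hx => ?_⟩
  have hxU : x * u⁻¹ ∈ U := hx
  have ce := (mem_U_iff K L U hL hU hGK u x).1 hxU
  have hiff := ce g hg
  exact (hiff.1 hfix) x (mem_rcoset_self L x)

lemma stab_step (S : Subgroup G) (hSnormal : S.Normal) (hSsimple : IsSimpleGroup S)
    (hSnonabelian : ¬ ∀ a b : S, a * b = b * a)
    (hScent : ∀ g : G, (∀ s ∈ S, g * s = s * g) → g = 1)
    (K : Subgroup (Equiv.Perm G)) (L U : Subgroup G)
    (hL : (L : Set G) = minBlock K) (hU : (U : Set G) = Uset K L)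
    (hGK : starGroup (⊤ : Subgroup G) ≤ K)
    (h1 : ∀ z : G, Rel2 K L U z 1 → z = 1) :
    ∀ u₀ : G, ∃ x₀ : G, x₀ * u₀⁻¹ ∉ U ∧ StabSet K L U x₀ ⊆ StabSet K L U u₀ := by
  intro u₀
  obtain ⟨x₀, hx₀, hsep⟩ :=
    sep_exists S hSnormal hSsimple hSnonabelian hScent K L U hL hU hGK h1 u₀
  refine ⟨x₀, hx₀, fun g hg => ?_⟩
  obtain ⟨hgH, hgfix⟩ := hg
  have hcosetfix : ∀ w ∈ rcoset L u₀, g w = w := by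
    intro w hw
    exact boot K L U hL hU hGK x₀ u₀ hsep g hgH (fun x hx => hgfix x hx) w hw
  exact coset_fix_to_class K L U hL hU hGK u₀ hgH hcosetfix

lemma bad_false (S : Subgroup G) (hSnormal : S.Normal) (hSsimple : IsSimpleGroup S)
    (hSnonabelian : ¬ ∀ a b : S, a * b = b * a)
    (hScent : ∀ g : G, (∀ s ∈ S, g * s = s * g) → g = 1)
    (K : Subgroup (Equiv.Perm G)) (L U : Subgroup G)
    (hL : (L : Set G) = minBlock K) (hU : (U : Set G) = Uset K L)
    (hGK : starGroup (⊤ : Subgroup G) ≤ K)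
    (h1 : ∀ z : G, Rel2 K L U z 1 → z = 1) : False := by
  have hstep := stab_step S hSnormal hSsimple hSnonabelian hScent K L U hL hU hGK h1
  choose fc hfc1 hfc2 using hstep
  set seq : ℕ → G := fun n => fc^[n] 1 with hseq
  have hseq_succ : ∀ n, seq (n + 1) = fc (seq n) := by
    intro n
    rw [hseq]
    exact Function.iterate_succ_apply' fc n 1
  have chain : ∀ i j : ℕ, i ≤ j → StabSet K L U (seq j) ⊆ StabSet K L U (seq i) := by
    intro i j hij
    induction j, hij using Nat.le_induction with
    | base => exact subset_rfl
    | succ n hn ih =>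
      refine subset_trans ?_ ih
      rw [hseq_succ n]
      exact hfc2 (seq n)
  have hfin : ∃ i j : ℕ, i ≠ j ∧ rcoset U (seq i) = rcoset U (seq j) :=
    Finite.exists_ne_map_eq_of_infinite (fun n => rcoset U (seq n))
  have key : ∀ i j : ℕ, i < j → rcoset U (seq i) = rcoset U (seq j) → False := by
    intro i j hij heq
    have heqStab : StabSet K L U (seq i) = StabSet K L U (seq j) := by
      unfold StabSet
      rw [heq]
    have hsub1 : StabSet K L U (seq (i + 1)) ⊆ StabSet K L U (seq i) := by
      rw [hseq_succ i]
      exact hfc2 (seq i)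
    have hsub2 : StabSet K L U (seq i) ⊆ StabSet K L U (seq (i + 1)) := by
      rw [heqStab]
      exact chain (i + 1) j hij
    have hstabEq : StabSet K L U (seq (i + 1)) = StabSet K L U (seq i) :=
      subset_antisymm hsub1 hsub2
    -- derive that the two classes coincide, contradiction
    have ce : cosetEquiv K L (rcoset L (seq i)) (rcoset L (seq (i + 1))) := by
      intro f hf
      constructor
      · intro hfix
        have hf1 : f ∈ StabSet K L U (seq i) :=
          coset_fix_to_class K L U hL hU hGK (seq i) hf hfix
        have hf2 : f ∈ StabSet K L U (seq (i + 1)) := hstabEq ▸ hf1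
        intro w hw
        exact hf2.2 w (L_le_U K L U hU hw)
      · intro hfix
        have hf1 : f ∈ StabSet K L U (seq (i + 1)) :=
          coset_fix_to_class K L U hL hU hGK (seq (i + 1)) hf hfix
        have hf2 : f ∈ StabSet K L U (seq i) := hstabEq ▸ hf1
        intro w hw
        exact hf2.2 w (L_le_U K L U hU hw)
    have hmem : seq (i + 1) * (seq i)⁻¹ ∈ U := (mem_U_iff K L U hL hU hGK (seq i) (seq (i+1))).2 ce
    have hnot : fc (seq i) * (seq i)⁻¹ ∉ U := hfc1 (seq i)
    rw [hseq_succ i] at hmem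
    exact hnot hmem
  obtain ⟨i, j, hij, heq⟩ := hfin
  rcases hij.lt_or_gt with h | h
  · exact key i j h heq
  · exact key j i h heq.symm

end AuxChunkF
set_option linter.unusedSectionVars false in
/-- for 2-closed `K`, the group `K_𝔏` is the direct product of its
constituents on the right cosets of `U`. -/
theorem stabCosets_is_direct_product (G : Type*) [Group G] [Fintype G]
    (S : Subgroup G) (hSnormal : S.Normal) (hSsimple : IsSimpleGroup S)
    (hSnonabelian : ¬ ∀ a b : S, a * b = b * a)
    (hScent : ∀ g : G, (∀ s ∈ S, g * s = s * g) → g = 1)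
    (K : Subgroup (Equiv.Perm G)) (hGK : starGroup (⊤ : Subgroup G) ≤ K)
    (h2cl : Is2Closed K)
    (L : Subgroup G) (hL : (L : Set G) = minBlock K)
    (U : Subgroup G) (hU : (U : Set G) = Uset K L) :
    ∀ f : Equiv.Perm G, f ∈ stabCosets K L ↔
      ∀ y : G, ∃ k ∈ stabCosets K L, ∀ x ∈ rcoset U y, f x = (k : Equiv.Perm G) x := by
  have hW : ∀ z ∈ L, Rel2 K L U z 1 := by
    rcases Wset_dichotomy K L U hL hU hGK with h | h
    · exact h
    · exact absurd (bad_false S hSnormal hSsimple hSnonabelian hScent K L U hL hU hGK h) id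
  intro f
  constructor
  · intro hf y
    exact ⟨f, hf, fun x _ => rfl⟩
  · intro hf
    choose kk hkmem hkag using hf
    have hfx : ∀ x : G, f x = kk x x := fun x => hkag x x (mem_rcoset_self U x)
    refine ⟨?_, fun x => ?_⟩
    · -- f ∈ K via 2-closedness
      apply h2cl
      intro a b
      by_cases hab : b * a⁻¹ ∈ U
      · exact ⟨kk a, (hkmem a).1, (hkag a a (mem_rcoset_self U a)).symm, (hkag a b hab).symm⟩
      · have hH : (kk a)⁻¹ * kk b ∈ stabCosets K L :=
          (stabCosets K L).mul_mem ((stabCosets K L).inv_mem (hkmem a)) (hkmem b)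
        have hlamL : (((kk a)⁻¹ * kk b) b) * b⁻¹ ∈ L := hH.2 b
        have hba : a * b⁻¹ ∉ U := by
          intro hmem
          apply hab
          have := U.inv_mem hmem
          simpa using this
        have huv : b * (((((kk a)⁻¹ * kk b) b) * b⁻¹) * b)⁻¹ ∈ L := by
          have e : b * (((((kk a)⁻¹ * kk b) b) * b⁻¹) * b)⁻¹
              = ((((kk a)⁻¹ * kk b) b) * b⁻¹)⁻¹ := by group
          rw [e]
          exact L.inv_mem hlamL
        obtain ⟨k', hk', hk'a, hk'b⟩ :=
          good_T K L U hL hU hGK hW b (((((kk a)⁻¹ * kk b) b) * b⁻¹) * b) a huv hba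
        refine ⟨kk a * k', K.mul_mem (hkmem a).1 hk', ?_, ?_⟩
        · rw [Equiv.Perm.mul_apply, hk'a, ← hfx a]
        · rw [Equiv.Perm.mul_apply, hk'b]
          have e2 : ((((kk a)⁻¹ * kk b) b) * b⁻¹) * b = ((kk a)⁻¹ * kk b) b := by group
          rw [e2, Equiv.Perm.mul_apply, Equiv.Perm.inv_def, Equiv.apply_symm_apply, ← hfx b]
    · rw [hfx x]
      exact (hkmem x).2 x
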